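/- arXiv:1709.05707 — 4 statements merged into one kernel-verified Lean document; each statement's English description precedes it below -/
import Mathlib

section
/- For every nondecreasing real sequence a₁ ≤ a₂ ≤ … ≤ aₙ and every integer l ≥ 1 with l ≤ n, one has ∑_{i=1}^{n−l+1} ( ā_{i,i+l−1} − a_i ) ≤ ((l−1)/2)·(aₙ − a₁), where ā_{i,j} := (a_i + a_{i+1} + … + a_j)/(j − i + 1) is the mean of a_i,…,a_j. -/
open Finset

/-- For a nondecreasing sequence `a₀ ≤ … ≤ a_{n-1}` and `1 ≤ l ≤ n`,
`∑_{i=0}^{n-l} (ā_{i,i+l-1} - a_i) ≤ ((l-1)/2)(a_{n-1} - a₀)`, where `ā_{i,i+l-1}` is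
the mean of the `l` entries `a_i, …, a_{i+l-1}`. -/
theorem sum_block_mean_minus_left_le (n l : ℕ) (hl : 1 ≤ l) (hln : l ≤ n)
    (a : ℕ → ℝ) (ha : ∀ i j : ℕ, i ≤ j → j < n → a i ≤ a j) :
    ∑ i ∈ Finset.range (n - l + 1), ((∑ j ∈ Finset.range l, a (i + j)) / l - a i) ≤
      ((l : ℝ) - 1) / 2 * (a (n - 1) - a 0) := by
  have hn : 1 ≤ n := le_trans hl hln
  have hlpos : (0:ℝ) < l := by exact_mod_cast hl
  set m := n - l + 1 with hm
  have key : ∀ j ∈ Finset.range l,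
      ∑ i ∈ Finset.range m, (a (i + j) - a i) ≤ (j:ℝ) * (a (n-1) - a 0) := by
    intro j hj
    rw [Finset.mem_range] at hj
    have h1 : ∑ i ∈ Finset.range m, a (i + j)
        = ∑ i ∈ Finset.range m, a i + ∑ i ∈ Finset.range j, a (m + i)
          - ∑ i ∈ Finset.range j, a i := by
      have e1 : ∑ k ∈ Finset.range (j + m), a k
          = ∑ k ∈ Finset.range j, a k + ∑ i ∈ Finset.range m, a (j + i) :=
        Finset.sum_range_add a j m
      have e2 : ∑ k ∈ Finset.range (m + j), a k
          = ∑ k ∈ Finset.range m, a k + ∑ i ∈ Finset.range j, a (m + i) :=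
        Finset.sum_range_add a m j
      have e3 : ∑ i ∈ Finset.range m, a (i + j) = ∑ i ∈ Finset.range m, a (j + i) := by
        apply Finset.sum_congr rfl; intro i _; rw [Nat.add_comm]
      rw [e3]
      have : j + m = m + j := Nat.add_comm j m
      rw [this] at e1
      linarith [e1, e2]
    rw [Finset.sum_sub_distrib, h1]
    have h2 : ∑ i ∈ Finset.range j, (a (m + i) - a i) ≤ (j:ℝ) * (a (n-1) - a 0) := by
      calc ∑ i ∈ Finset.range j, (a (m + i) - a i)
          ≤ ∑ i ∈ Finset.range j, (a (n-1) - a 0) := by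
            apply Finset.sum_le_sum
            intro i hi
            rw [Finset.mem_range] at hi
            have h3 : a (m + i) ≤ a (n-1) := ha _ _ (by omega) (by omega)
            have h4 : a 0 ≤ a i := ha _ _ (by omega) (by omega)
            linarith
        _ = (j:ℝ) * (a (n-1) - a 0) := by
            rw [Finset.sum_const, Finset.card_range, nsmul_eq_mul]
    rw [Finset.sum_sub_distrib] at h2
    linarith
  have step : ∑ i ∈ Finset.range m, ((∑ j ∈ Finset.range l, a (i + j)) / l - a i)
      = (∑ j ∈ Finset.range l, ∑ i ∈ Finset.range m, (a (i + j) - a i)) / l := by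
    rw [show (∑ j ∈ Finset.range l, ∑ i ∈ Finset.range m, (a (i + j) - a i))
        = ∑ i ∈ Finset.range m, ∑ j ∈ Finset.range l, (a (i + j) - a i) from Finset.sum_comm,
      Finset.sum_div]
    apply Finset.sum_congr rfl
    intro i _
    rw [Finset.sum_sub_distrib, Finset.sum_const, Finset.card_range, nsmul_eq_mul]
    field_simp
  rw [step]
  have hbound : ∑ j ∈ Finset.range l, ∑ i ∈ Finset.range m, (a (i + j) - a i)
      ≤ (l : ℝ) * ((l : ℝ) - 1) / 2 * (a (n-1) - a 0) := by
    calc ∑ j ∈ Finset.range l, ∑ i ∈ Finset.range m, (a (i + j) - a i)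
        ≤ ∑ j ∈ Finset.range l, (j:ℝ) * (a (n-1) - a 0) := Finset.sum_le_sum key
      _ = (∑ j ∈ Finset.range l, (j:ℝ)) * (a (n-1) - a 0) := by rw [Finset.sum_mul]
      _ = (l : ℝ) * ((l : ℝ) - 1) / 2 * (a (n-1) - a 0) := by
          congr 1
          have h := congrArg (Nat.cast : ℕ → ℝ) (Finset.sum_range_id_mul_two l)
          push_cast [Nat.cast_sub hl] at h
          linarith
  rw [div_le_iff₀ hlpos] at *
  · calc (∑ j ∈ Finset.range l, ∑ i ∈ Finset.range m, (a (i + j) - a i))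
        ≤ (l : ℝ) * ((l : ℝ) - 1) / 2 * (a (n-1) - a 0) := hbound
      _ = ((l : ℝ) - 1) / 2 * (a (n - 1) - a 0) * (l:ℝ) := by ring
end

section
/- Let θ ∈ 𝓘 := {x ∈ ℝⁿ : x₁ ≤ … ≤ xₙ} be a nondecreasing vector with exactly k constant blocks of lengths n₁,…,n_k (so n₁+…+n_k = n and θ is constant on each block with strictly increasing block values). Then the tangent cone of 𝓘 at θ equals the Cartesian product 𝓘_{n₁} × … × 𝓘_{n_k}, where 𝓘_ℓ = {x ∈ ℝ^ℓ : x₁ ≤ … ≤ x_ℓ}. -/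
/-- The monotone (isotonic) cone in ℝⁿ. -/
def monotoneCone (n : ℕ) : Set (EuclideanSpace ℝ (Fin n)) :=
  {x | ∀ i j : Fin n, i ≤ j → x i ≤ x j}

/-- `i₁` and `i₂` lie in the same block of the partition of `{0,…,n-1}` into the `k`
consecutive intervals `[s j, s (j+1))`. -/
def sameBlock (k : ℕ) (s : ℕ → ℕ) (i₁ i₂ : ℕ) : Prop :=
  ∃ j < k, s j ≤ i₁ ∧ i₁ < s (j + 1) ∧ s j ≤ i₂ ∧ i₂ < s (j + 1)

/-- Let `θ ∈ 𝓘` be a nondecreasing vector with exactly `k` constant blocks, the blocks being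
the consecutive intervals `[s j, s (j+1))` (`s 0 = 0`, `s k = n`, `s` strictly increasing on
`{0,…,k}`), with `θ` constant on each block and strictly increasing between consecutive blocks.
Then the tangent cone of `𝓘` at `θ` equals the Cartesian product `𝓘_{n₁} × … × 𝓘_{n_k}`:
the set of vectors that are nondecreasing within each block. -/
theorem tangent_cone_isotonic_at_piecewise_constant {n k : ℕ}
    (θ : EuclideanSpace ℝ (Fin n)) (hθ : θ ∈ monotoneCone n)
    (s : ℕ → ℕ) (hs0 : s 0 = 0) (hsk : s k = n)
    (hinc : ∀ j < k, s j < s (j + 1))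
    (hconst : ∀ i₁ i₂ : Fin n, sameBlock k s i₁ i₂ → θ i₁ = θ i₂)
    (hjump : ∀ (i₁ i₂ : Fin n) (j₁ j₂ : ℕ), j₁ < j₂ → j₂ < k →
      s j₁ ≤ (i₁ : ℕ) → (i₁ : ℕ) < s (j₁ + 1) →
      s j₂ ≤ (i₂ : ℕ) → (i₂ : ℕ) < s (j₂ + 1) → θ i₁ < θ i₂) :
    closure {x | ∃ t : ℝ, 0 ≤ t ∧ ∃ η ∈ monotoneCone n, x = t • (η - θ)} =
      {x : EuclideanSpace ℝ (Fin n) |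
        ∀ i₁ i₂ : Fin n, sameBlock k s i₁ i₂ → i₁ ≤ i₂ → x i₁ ≤ x i₂} := by
  classical
  -- monotonicity of s on [0, k]
  have smono : ∀ b ≤ k, ∀ a ≤ b, s a ≤ s b := by
    intro b
    induction b with
    | zero => intro _ a ha; have : a = 0 := Nat.le_zero.mp ha; rw [this]
    | succ m ih =>
      intro hbk a hab
      rcases Nat.lt_succ_iff_lt_or_eq.mp (Nat.lt_succ_of_le hab) with h | h
      · exact le_trans (ih (by omega) a (by omega)) (le_of_lt (hinc m (by omega)))
      · exact le_of_eq (by rw [h])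
  -- every index lies in a block
  have blockOf : ∀ i : Fin n, ∃ j, j < k ∧ s j ≤ (i : ℕ) ∧ (i : ℕ) < s (j + 1) := by
    intro i
    set j := Nat.findGreatest (fun j => s j ≤ (i : ℕ)) k with hjdef
    have hsle : s j ≤ (i : ℕ) :=
      Nat.findGreatest_spec (P := fun j => s j ≤ (i : ℕ)) (Nat.zero_le k) (by simp [hs0])
    have hjk : j ≤ k := Nat.findGreatest_le k
    have hjlt : j < k := by
      rcases lt_or_eq_of_le hjk with h | h
      · exact h
      · exfalso; rw [h, hsk] at hsle; have := i.isLt; omega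
    refine ⟨j, hjlt, hsle, ?_⟩
    by_contra hcon
    push_neg at hcon
    exact Nat.findGreatest_is_greatest (Nat.lt_succ_self j) (by omega) hcon
  apply Set.Subset.antisymm
  · apply closure_minimal
    · rintro x ⟨t, ht, η, hη, rfl⟩ i₁ i₂ hsb hle
      simp only [PiLp.smul_apply, PiLp.sub_apply, smul_eq_mul]
      have h1 := hconst i₁ i₂ hsb
      have h2 := hη i₁ i₂ hle
      nlinarith
    · have heq : {x : EuclideanSpace ℝ (Fin n) |
          ∀ i₁ i₂ : Fin n, sameBlock k s i₁ i₂ → i₁ ≤ i₂ → x i₁ ≤ x i₂}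
          = ⋂ (i₁ : Fin n), ⋂ (i₂ : Fin n), ⋂ (_ : sameBlock k s i₁ i₂), ⋂ (_ : i₁ ≤ i₂),
              {x : EuclideanSpace ℝ (Fin n) | x i₁ ≤ x i₂} := by
        ext x; simp only [Set.mem_setOf_eq, Set.mem_iInter]
      rw [heq]
      exact isClosed_iInter fun i₁ => isClosed_iInter fun i₂ => isClosed_iInter fun _ =>
        isClosed_iInter fun _ =>
          isClosed_le (EuclideanSpace.proj i₁).continuous (EuclideanSpace.proj i₂).continuous
  · intro x hx
    apply subset_closure
    rcases Nat.eq_zero_or_pos n with hn | hn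
    · refine ⟨1, zero_le_one, θ, hθ, ?_⟩
      ext i
      exact absurd i.isLt (by omega)
    · haveI : Nonempty (Fin n) := ⟨⟨0, hn⟩⟩
      set T : ℝ := max 1 (Finset.univ.sup' Finset.univ_nonempty
        (fun p : Fin n × Fin n => (x p.1 - x p.2) / (θ p.2 - θ p.1))) with hTdef
      have hT1 : (1 : ℝ) ≤ T := le_max_left _ _
      have hTpos : (0 : ℝ) < T := lt_of_lt_of_le one_pos hT1
      refine ⟨T, le_of_lt hTpos, θ + T⁻¹ • x, ?_, ?_⟩
      · -- η is monotone
        intro i j hij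
        simp only [PiLp.add_apply, PiLp.smul_apply, smul_eq_mul]
        obtain ⟨j₁, hj₁k, h₁l, h₁r⟩ := blockOf i
        obtain ⟨j₂, hj₂k, h₂l, h₂r⟩ := blockOf j
        have hj₁₂ : j₁ ≤ j₂ := by
          by_contra hcon
          push_neg at hcon
          have : s (j₁) ≤ (i : ℕ) := h₁l
          have hss : s (j₂ + 1) ≤ s j₁ := smono j₁ (le_of_lt hj₁k) (j₂ + 1) (by omega)
          have hij' : (i : ℕ) ≤ (j : ℕ) := hij
          omega
        rcases lt_or_eq_of_le hj₁₂ with hlt | heq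
        · -- different blocks: use the jump
          have hθlt : θ i < θ j := hjump i j j₁ j₂ hlt hj₂k h₁l h₁r h₂l h₂r
          have hratio : (x i - x j) / (θ j - θ i) ≤ T :=
            le_trans (Finset.le_sup' (f := fun p : Fin n × Fin n =>
              (x p.1 - x p.2) / (θ p.2 - θ p.1)) (Finset.mem_univ (i, j))) (le_max_right _ _)
          have hgap : (0 : ℝ) < θ j - θ i := by linarith
          have hxd : x i - x j ≤ T * (θ j - θ i) := by
            rwa [div_le_iff₀ hgap] at hratio
          have hinv : (0 : ℝ) < T⁻¹ := inv_pos.mpr hTpos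
          have hcancel : T⁻¹ * T = 1 := inv_mul_cancel₀ (ne_of_gt hTpos)
          nlinarith
        · -- same block
          subst heq
          have hθeq : θ i = θ j := hconst i j ⟨j₁, hj₁k, h₁l, h₁r, h₂l, h₂r⟩
          have hxle : x i ≤ x j := hx i j ⟨j₁, hj₁k, h₁l, h₁r, h₂l, h₂r⟩ hij
          have hinv : (0 : ℝ) < T⁻¹ := inv_pos.mpr hTpos
          nlinarith
      · ext i
        simp only [PiLp.smul_apply, PiLp.sub_apply, PiLp.add_apply, smul_eq_mul]
        field_simp
        ring
end

section
/- Let 𝓒 ⊆ ℝⁿ be a nonempty closed convex set, θ* ∈ ℝⁿ, σ > 0, and Z a random vector in ℝⁿ with 𝔼Z = 0 and 𝔼‖Z‖² < ∞. Let Y = θ* + σZ and let θ̂ be the projection of Y onto 𝓒. Then 𝔼‖θ̂ − θ*‖² ≤ inf_{θ ∈ 𝓒} { ‖θ* − θ‖² + σ² 𝔼‖Π_{T_𝓒(θ)}(Z)‖² }, where Π_{T_𝓒(θ)} denotes the metric projection onto the tangent cone T_𝓒(θ) of 𝓒 at θ. -/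
open MeasureTheory

/-- The tangent cone of a set `C` at `θ`: the closure of `{t (η - θ) : t ≥ 0, η ∈ C}`. -/
def tangentConeOf {n : ℕ} (C : Set (EuclideanSpace ℝ (Fin n)))
    (θ : EuclideanSpace ℝ (Fin n)) : Set (EuclideanSpace ℝ (Fin n)) :=
  closure {x | ∃ t : ℝ, 0 ≤ t ∧ ∃ η ∈ C, x = t • (η - θ)}

open RealInnerProductSpace

section aux

variable {n : ℕ}
local notation "E" => EuclideanSpace ℝ (Fin n)

/- variational inequality from minimization over a convex set -/
lemma var_ineq {K : Set E} (hK : Convex ℝ K) {z p : E} (hp : p ∈ K)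
    (hmin : ∀ c ∈ K, ‖z - p‖ ≤ ‖z - c‖) :
    ∀ w ∈ K, ⟪z - p, w - p⟫ ≤ (0:ℝ) := by
  haveI : Nonempty K := ⟨⟨p, hp⟩⟩
  have hbdd : BddBelow (Set.range fun w : K => ‖z - (w : EuclideanSpace ℝ (Fin n))‖) :=
    ⟨0, by rintro x ⟨w, rfl⟩; exact norm_nonneg _⟩
  have hinf : ‖z - p‖ = ⨅ w : K, ‖z - (w : EuclideanSpace ℝ (Fin n))‖ := by
    apply le_antisymm
    · exact le_ciInf fun w => hmin w w.2
    · exact ciInf_le hbdd ⟨p, hp⟩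
  exact (norm_eq_iInf_iff_real_inner_le_zero hK hp).1 hinf

lemma tc_pre_convex {C : Set E} (hC : Convex ℝ C) {θ : E} (hθ : θ ∈ C) :
    Convex ℝ {x | ∃ t : ℝ, 0 ≤ t ∧ ∃ η ∈ C, x = t • (η - θ)} := by
  rintro x ⟨t₁, ht₁, η₁, hη₁, rfl⟩ y ⟨t₂, ht₂, η₂, hη₂, rfl⟩ a b ha hb hab
  by_cases hs : a * t₁ + b * t₂ = 0
  · have h1 : a * t₁ = 0 := by nlinarith [mul_nonneg ha ht₁, mul_nonneg hb ht₂]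
    have h2 : b * t₂ = 0 := by nlinarith [mul_nonneg ha ht₁, mul_nonneg hb ht₂]
    refine ⟨0, le_refl 0, θ, hθ, ?_⟩
    rw [smul_smul, smul_smul, h1, h2]
    simp
  · have hs' : 0 < a * t₁ + b * t₂ := lt_of_le_of_ne (by positivity) (Ne.symm hs)
    refine ⟨a * t₁ + b * t₂, le_of_lt hs',
      (a * t₁ / (a * t₁ + b * t₂)) • η₁ + (b * t₂ / (a * t₁ + b * t₂)) • η₂,
      hC hη₁ hη₂ (by positivity) (by positivity) (by field_simp), ?_⟩
    rw [smul_smul, smul_smul]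
    rw [smul_sub, smul_sub, smul_sub]
    rw [smul_add, smul_smul, smul_smul]
    field_simp
    module

lemma tc_convex {C : Set E} (hC : Convex ℝ C) {θ : E} (hθ : θ ∈ C) :
    Convex ℝ (tangentConeOf C θ) :=
  (tc_pre_convex hC hθ).closure

lemma tc_smul {C : Set E} {θ : E} {x : E} (hx : x ∈ tangentConeOf C θ) {t : ℝ}
    (ht : 0 ≤ t) : t • x ∈ tangentConeOf C θ := by
  have hmaps : Set.MapsTo (fun y : E => t • y)
      {x | ∃ s : ℝ, 0 ≤ s ∧ ∃ η ∈ C, x = s • (η - θ)}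
      {x | ∃ s : ℝ, 0 ≤ s ∧ ∃ η ∈ C, x = s • (η - θ)} := by
    rintro y ⟨s, hs, η, hη, rfl⟩
    exact ⟨t * s, mul_nonneg ht hs, η, hη, by simp [smul_smul]⟩
  exact (hmaps.closure (continuous_const_smul t)) hx

lemma tc_add {C : Set E} (hC : Convex ℝ C) {θ : E} (hθ : θ ∈ C) {x y : E}
    (hx : x ∈ tangentConeOf C θ) (hy : y ∈ tangentConeOf C θ) :
    x + y ∈ tangentConeOf C θ := by
  have hmid : (1/2 : ℝ) • x + (1/2 : ℝ) • y ∈ tangentConeOf C θ :=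
    tc_convex hC hθ hx hy (by norm_num) (by norm_num) (by norm_num)
  have := tc_smul hmid (t := 2) (by norm_num)
  have heq : (2:ℝ) • ((1/2 : ℝ) • x + (1/2 : ℝ) • y) = x + y := by module
  rwa [heq] at this

lemma mem_tc {C : Set E} {θ η : E} (hη : η ∈ C) : η - θ ∈ tangentConeOf C θ :=
  subset_closure ⟨1, zero_le_one, η, hη, (one_smul ℝ _).symm⟩

lemma zero_mem_tc {C : Set E} {θ : E} (hθ : θ ∈ C) : (0:E) ∈ tangentConeOf C θ :=
  subset_closure ⟨0, le_refl 0, θ, hθ, by simp⟩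

/- nonexpansiveness of projection -/
lemma proj_nonexpansive {K : Set E} (hK : Convex ℝ K) {z₁ z₂ p₁ p₂ : E}
    (hp₁ : p₁ ∈ K) (hm₁ : ∀ c ∈ K, ‖z₁ - p₁‖ ≤ ‖z₁ - c‖)
    (hp₂ : p₂ ∈ K) (hm₂ : ∀ c ∈ K, ‖z₂ - p₂‖ ≤ ‖z₂ - c‖) :
    ‖p₁ - p₂‖ ≤ ‖z₁ - z₂‖ := by
  have h1 : ⟪z₁ - p₁, p₂ - p₁⟫ ≤ (0:ℝ) := var_ineq hK hp₁ hm₁ p₂ hp₂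
  have h2 : ⟪z₂ - p₂, p₁ - p₂⟫ ≤ (0:ℝ) := var_ineq hK hp₂ hm₂ p₁ hp₁
  have key : ‖p₁ - p₂‖ ^ 2 ≤ ⟪z₁ - z₂, p₁ - p₂⟫ := by
    have hz : ⟪z₁ - z₂, p₁ - p₂⟫ - ‖p₁ - p₂‖ ^ 2
        = (- ⟪z₁ - p₁, p₂ - p₁⟫) + (- ⟪z₂ - p₂, p₁ - p₂⟫) := by
      rw [← real_inner_self_eq_norm_sq]
      simp only [inner_sub_left, inner_sub_right]
      ring
    nlinarith
  have hle : ⟪z₁ - z₂, p₁ - p₂⟫ ≤ ‖z₁ - z₂‖ * ‖p₁ - p₂‖ := real_inner_le_norm _ _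
  nlinarith [norm_nonneg (p₁ - p₂), norm_nonneg (z₁ - z₂)]

/- The deterministic inequality. -/
lemma det_ineq {C : Set E} (hC : Convex ℝ C) {θ θstar θh z pz : E} {σ : ℝ}
    (hσ : 0 ≤ σ) (hθ : θ ∈ C) (hθh : θh ∈ C)
    (hmin : ∀ c ∈ C, ‖θstar + σ • z - θh‖ ≤ ‖θstar + σ • z - c‖)
    (hpz : pz ∈ tangentConeOf C θ)
    (hpzmin : ∀ w ∈ tangentConeOf C θ, ‖z - pz‖ ≤ ‖z - w‖) :
    ‖θh - θstar‖ ^ 2 ≤ ‖θstar - θ‖ ^ 2 + σ ^ 2 * ‖pz‖ ^ 2 := by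
  have hTconv : Convex ℝ (tangentConeOf C θ) := tc_convex hC hθ
  have h1 : ⟪θstar + σ • z - θh, θ - θh⟫ ≤ (0:ℝ) :=
    var_ineq hC hθh hmin θ hθ
  have hmemT : θh - θ + pz ∈ tangentConeOf C θ :=
    tc_add hC hθ (mem_tc hθh) hpz
  have h2' : ⟪z - pz, (θh - θ + pz) - pz⟫ ≤ (0:ℝ) :=
    var_ineq hTconv hpz hpzmin _ hmemT
  have h2 : ⟪z - pz, θh - θ⟫ ≤ (0:ℝ) := by
    have : (θh - θ + pz) - pz = θh - θ := by abel
    rwa [this] at h2'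
  -- A := ⟪θh - θstar, θh - θ⟫ ≤ σ * ⟪z, θh - θ⟫ ≤ σ * ⟪pz, θh - θ⟫
  have hA : ⟪θh - θstar, θh - θ⟫ ≤ σ * ⟪pz, θh - θ⟫ := by
    have e1 : ⟪θstar + σ • z - θh, θ - θh⟫
        = ⟪θh - θstar, θh - θ⟫ - σ * ⟪z, θh - θ⟫ := by
      simp only [inner_sub_left, inner_sub_right, inner_add_left, real_inner_smul_left]
      ring
    have e2 : ⟪z - pz, θh - θ⟫ = ⟪z, θh - θ⟫ - ⟪pz, θh - θ⟫ := by
      simp [inner_sub_left]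
    nlinarith
  have hcs : ⟪pz, θh - θ⟫ ≤ ‖pz‖ * ‖θh - θ‖ := real_inner_le_norm _ _
  have hid : ‖θstar - θ‖ ^ 2
      = ‖θh - θstar‖ ^ 2 - 2 * ⟪θh - θstar, θh - θ⟫ + ‖θh - θ‖ ^ 2 := by
    have : θstar - θ = (θh - θ) - (θh - θstar) := by abel
    rw [this, norm_sub_sq_real, real_inner_comm]
    ring
  nlinarith [norm_nonneg (θh - θ), norm_nonneg pz, sq_nonneg (σ * ‖pz‖ - ‖θh - θ‖),
    mul_nonneg (mul_nonneg hσ (norm_nonneg pz)) (norm_nonneg (θh - θ))]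

end aux

/-- Bellec's oracle inequality via tangent cones: if `Y = θ* + σ Z` with `𝔼 Z = 0`,
`𝔼‖Z‖² < ∞`, and `θ̂(ω)` is the projection of `Y(ω)` onto the nonempty closed convex set
`C`, then for every `θ ∈ C`,
`𝔼‖θ̂ - θ*‖² ≤ ‖θ* - θ‖² + σ² 𝔼‖Π_{T_C(θ)}(Z)‖²`,
where `Π_{T_C(θ)}(Z)(ω)` is the projection of `Z(ω)` onto the tangent cone `T_C(θ)`.
(The bound for every `θ ∈ C` is equivalent to the bound with the infimum over `θ ∈ C`.) -/
theorem risk_bound_tangent_cone {n : ℕ} {Ω : Type*} [MeasureSpace Ω]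
    (μ : Measure Ω) [IsProbabilityMeasure μ]
    (C : Set (EuclideanSpace ℝ (Fin n))) (hne : C.Nonempty) (hclosed : IsClosed C)
    (hconv : Convex ℝ C)
    (θstar : EuclideanSpace ℝ (Fin n)) (σ : ℝ) (hσ : 0 < σ)
    (Z : Ω → EuclideanSpace ℝ (Fin n)) (hZmeas : AEStronglyMeasurable Z μ)
    (hZint : Integrable Z μ) (hZmean : ∫ ω, Z ω ∂μ = 0)
    (hZsq : Integrable (fun ω => ‖Z ω‖ ^ 2) μ)
    (Y : Ω → EuclideanSpace ℝ (Fin n)) (hY : ∀ ω, Y ω = θstar + σ • Z ω)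
    (θhat : Ω → EuclideanSpace ℝ (Fin n))
    (hproj : ∀ ω, θhat ω ∈ C ∧ ∀ c ∈ C, ‖Y ω - θhat ω‖ ≤ ‖Y ω - c‖)
    (PZ : EuclideanSpace ℝ (Fin n) → Ω → EuclideanSpace ℝ (Fin n))
    (hPZ : ∀ θ ∈ C, ∀ ω, PZ θ ω ∈ tangentConeOf C θ ∧
      ∀ w ∈ tangentConeOf C θ, ‖Z ω - PZ θ ω‖ ≤ ‖Z ω - w‖) :
    ∀ θ ∈ C,
      ∫ ω, ‖θhat ω - θstar‖ ^ 2 ∂μ ≤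
        ‖θstar - θ‖ ^ 2 + σ ^ 2 * ∫ ω, ‖PZ θ ω‖ ^ 2 ∂μ := by
  intro θ hθ
  set T := tangentConeOf C θ with hT
  have hTne : T.Nonempty := ⟨0, zero_mem_tc hθ⟩
  have hTcl : IsClosed T := isClosed_closure
  have hTconv : Convex ℝ T := tc_convex hconv hθ
  -- metric projection onto T
  have hex : ∀ u : EuclideanSpace ℝ (Fin n),
      ∃ v, v ∈ T ∧ ∀ c ∈ T, ‖u - v‖ ≤ ‖u - c‖ := by
    intro u
    obtain ⟨v, hv, hvmin⟩ :=
      exists_norm_eq_iInf_of_complete_convex hTne hTcl.isComplete hTconv u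
    refine ⟨v, hv, fun c hc => ?_⟩
    have hbdd : BddBelow (Set.range fun w : T => ‖u - (w : EuclideanSpace ℝ (Fin n))‖) :=
      ⟨0, by rintro x ⟨w, rfl⟩; exact norm_nonneg _⟩
    calc ‖u - v‖ = ⨅ w : T, ‖u - (w : EuclideanSpace ℝ (Fin n))‖ := hvmin
    _ ≤ ‖u - c‖ := ciInf_le hbdd ⟨c, hc⟩
  let F : EuclideanSpace ℝ (Fin n) → EuclideanSpace ℝ (Fin n) :=
    fun u => (hex u).choose
  have hFmem : ∀ u, F u ∈ T := fun u => (hex u).choose_spec.1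
  have hFmin : ∀ u, ∀ c ∈ T, ‖u - F u‖ ≤ ‖u - c‖ := fun u => (hex u).choose_spec.2
  have hFlip : LipschitzWith 1 F := by
    refine LipschitzWith.of_dist_le_mul fun x y => ?_
    simp only [dist_eq_norm, NNReal.coe_one, one_mul]
    exact proj_nonexpansive hTconv (hFmem x) (hFmin x) (hFmem y) (hFmin y)
  have hPZeq : ∀ ω, PZ θ ω = F (Z ω) := by
    intro ω
    have h := proj_nonexpansive hTconv (hPZ θ hθ ω).1 (hPZ θ hθ ω).2
      (hFmem (Z ω)) (hFmin (Z ω))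
    have h' : PZ θ ω - F (Z ω) = 0 := by simpa using h
    exact sub_eq_zero.mp h'
  have hcont : Continuous fun x : EuclideanSpace ℝ (Fin n) => ‖F x‖ ^ 2 :=
    (hFlip.continuous.norm).pow 2
  have hmeas : AEStronglyMeasurable (fun ω => ‖PZ θ ω‖ ^ 2) μ := by
    have : (fun ω => ‖PZ θ ω‖ ^ 2) = fun ω => ‖F (Z ω)‖ ^ 2 := by
      funext ω; rw [hPZeq ω]
    rw [this]
    exact hcont.comp_aestronglyMeasurable hZmeas
  have hbound : ∀ ω, ‖PZ θ ω‖ ^ 2 ≤ 4 * ‖Z ω‖ ^ 2 := by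
    intro ω
    have h0 : ‖Z ω - PZ θ ω‖ ≤ ‖Z ω‖ := by
      have := (hPZ θ hθ ω).2 0 (zero_mem_tc hθ)
      simpa using this
    have h1 : ‖PZ θ ω‖ ≤ 2 * ‖Z ω‖ := by
      calc ‖PZ θ ω‖ = ‖Z ω - (Z ω - PZ θ ω)‖ := by rw [sub_sub_cancel]
      _ ≤ ‖Z ω‖ + ‖Z ω - PZ θ ω‖ := norm_sub_le _ _
      _ ≤ 2 * ‖Z ω‖ := by linarith
    nlinarith [norm_nonneg (PZ θ ω), norm_nonneg (Z ω)]
  have hPZint : Integrable (fun ω => ‖PZ θ ω‖ ^ 2) μ := by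
    refine Integrable.mono' (hZsq.const_mul 4) hmeas (Filter.Eventually.of_forall fun ω => ?_)
    have := hbound ω
    rw [Real.norm_eq_abs, abs_of_nonneg (by positivity)]
    exact this
  -- pointwise deterministic inequality
  have hpt : ∀ ω, ‖θhat ω - θstar‖ ^ 2 ≤ ‖θstar - θ‖ ^ 2 + σ ^ 2 * ‖PZ θ ω‖ ^ 2 := by
    intro ω
    have hmin : ∀ c ∈ C, ‖θstar + σ • Z ω - θhat ω‖ ≤ ‖θstar + σ • Z ω - c‖ := by
      intro c hc
      have := (hproj ω).2 c hc
      rwa [hY ω] at this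
    exact det_ineq hconv hσ.le hθ (hproj ω).1 hmin (hPZ θ hθ ω).1 (hPZ θ hθ ω).2
  have hg : Integrable (fun ω => ‖θstar - θ‖ ^ 2 + σ ^ 2 * ‖PZ θ ω‖ ^ 2) μ :=
    (integrable_const _).add (hPZint.const_mul _)
  calc ∫ ω, ‖θhat ω - θstar‖ ^ 2 ∂μ
      ≤ ∫ ω, (‖θstar - θ‖ ^ 2 + σ ^ 2 * ‖PZ θ ω‖ ^ 2) ∂μ := by
        refine integral_mono_of_nonneg (Filter.Eventually.of_forall fun ω => by positivity)
          hg (Filter.Eventually.of_forall fun ω => hpt ω)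
    _ = ‖θstar - θ‖ ^ 2 + σ ^ 2 * ∫ ω, ‖PZ θ ω‖ ^ 2 ∂μ := by
        rw [integral_add (integrable_const _) (hPZint.const_mul _), integral_const,
          integral_const_mul]
        simp
end

section
/- Let ≼ be the unordered weak majorization preorder on ℝ^d: u ≼ v iff ∑_{k=1}^{i} u_k ≤ ∑_{k=1}^{i} v_k for all i ≤ d. For 1 ≤ k ≤ d−1 and ε ∈ ℝ define T_{k,ε}(z) := (z₁,…,z_{k−1}, z_k + ε, z_{k+1} − ε, z_{k+2},…,z_d), and let T_{d,ε}(z) := (z₁,…,z_{d−1}, z_d + ε). Then a function f : ℝ^d → ℝ is order preserving with respect to ≼ (u ≼ v implies f(u) ≤ f(v)) if and only if for every z ∈ ℝ^d and every k ∈ {1,…,d}, the map ε ↦ f(T_{k,ε}(z)) is nondecreasing in ε. -/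
/-- The unordered weak majorization relation on `ℝ^d`. -/
def weakMajorizes {d : ℕ} (u v : Fin d → ℝ) : Prop :=
  ∀ i : Fin d, ∑ k ∈ Finset.Iic i, u k ≤ ∑ k ∈ Finset.Iic i, v k

/-- The transformation `T_{k,ε}` adding `ε` to coordinate `k` and subtracting `ε` from
coordinate `k+1` (when it exists; for the last coordinate it just adds `ε`). -/
def Tshift {d : ℕ} (k : Fin d) (ε : ℝ) (z : Fin d → ℝ) : Fin d → ℝ :=
  fun i => z i + (if i = k then ε else 0) - (if (i : ℕ) = (k : ℕ) + 1 then ε else 0)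

lemma Tshift_zero {d : ℕ} (k : Fin d) (z : Fin d → ℝ) : Tshift k 0 z = z := by
  funext i; simp [Tshift]

lemma sum_Tshift {d : ℕ} (k : Fin d) (ε : ℝ) (z : Fin d → ℝ) (i : Fin d) :
    ∑ j ∈ Finset.Iic i, Tshift k ε z j =
      ∑ j ∈ Finset.Iic i, z j + (if (k : ℕ) ≤ (i : ℕ) then ε else 0)
        - (if (k : ℕ) + 1 ≤ (i : ℕ) then ε else 0) := by
  unfold Tshift
  rw [Finset.sum_sub_distrib, Finset.sum_add_distrib]
  congr 1
  · congr 1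
    rw [Finset.sum_ite_eq' (Finset.Iic i) k fun _ => ε]
    simp only [Finset.mem_Iic, Fin.le_def]
  · by_cases h : (k : ℕ) + 1 ≤ (i : ℕ)
    · have hd : (k : ℕ) + 1 < d := lt_of_le_of_lt h i.isLt
      have : ∀ j : Fin d, ((j : ℕ) = (k : ℕ) + 1) ↔ j = ⟨(k : ℕ) + 1, hd⟩ := by
        intro j; simp [Fin.ext_iff]
      simp_rw [this]
      rw [Finset.sum_ite_eq' (Finset.Iic i) _ fun _ => ε]
      simp [h, Fin.le_def]
    · rw [if_neg h]
      apply Finset.sum_eq_zero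
      intro j hj
      rw [if_neg]
      intro hjk
      have hji : (j : ℕ) ≤ (i : ℕ) := Fin.le_def.mp (Finset.mem_Iic.mp hj)
      omega

lemma eq_of_sum_Iic_eq {d : ℕ} (a b : Fin d → ℝ)
    (h : ∀ i : Fin d, ∑ j ∈ Finset.Iic i, a j = ∑ j ∈ Finset.Iic i, b j) : a = b := by
  suffices h' : ∀ n : ℕ, ∀ i : Fin d, (i : ℕ) = n → a i = b i by
    funext i; exact h' i i rfl
  intro n
  induction n using Nat.strong_induction_on with
  | _ n ih =>
    intro i hi
    have hIio : ∑ j ∈ Finset.Iio i, a j = ∑ j ∈ Finset.Iio i, b j :=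
      Finset.sum_congr rfl fun j hj => ih (j : ℕ)
        (by rw [← hi]; exact Fin.lt_def.mp (Finset.mem_Iio.mp hj)) j rfl
    have hins : Finset.Iic i = insert i (Finset.Iio i) := by
      ext j; simp [Finset.mem_Iic, Finset.mem_Iio, le_iff_lt_or_eq, or_comm]
    have h1 := h i
    rw [hins, Finset.sum_insert (by simp), Finset.sum_insert (by simp)] at h1
    linarith

/-- A function `f : ℝ^d → ℝ` is order preserving for unordered weak majorization iff for
every `z` and every `k`, the map `ε ↦ f(T_{k,ε}(z))` is nondecreasing in `ε`. -/
theorem orderPreserving_iff_Tshift_monotone {d : ℕ} (f : (Fin d → ℝ) → ℝ) :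
    (∀ u v : Fin d → ℝ, weakMajorizes u v → f u ≤ f v) ↔
      (∀ z : Fin d → ℝ, ∀ k : Fin d, Monotone fun ε : ℝ => f (Tshift k ε z)) := by
  constructor
  · intro hf z k ε ε' hεε'
    apply hf
    intro i
    rw [sum_Tshift, sum_Tshift]
    by_cases h1 : (k : ℕ) + 1 ≤ (i : ℕ)
    · have h2 : (k : ℕ) ≤ (i : ℕ) := le_trans (Nat.le_succ _) h1
      simp [h1, h2]
    · by_cases h2 : (k : ℕ) ≤ (i : ℕ)
      · simp only [if_pos h2, if_neg h1]; linarith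
      · simp [h1, h2]
  · intro hmono u v huv
    -- chain construction
    classical
    set S : Fin d → ℝ := fun i => ∑ j ∈ Finset.Iic i, u j with hS
    set T : Fin d → ℝ := fun i => ∑ j ∈ Finset.Iic i, v j with hT
    let W : ℕ → (Fin d → ℝ) := fun n => Nat.rec u
      (fun n w => if h : n < d then Tshift ⟨n, h⟩ (T ⟨n, h⟩ - S ⟨n, h⟩) w else w) n
    have key : ∀ n : ℕ,
        (∀ i : Fin d, ∑ j ∈ Finset.Iic i, W n j = if (i : ℕ) < n then T i else S i) ∧
        f u ≤ f (W n) := by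
      intro n
      induction n with
      | zero => exact ⟨fun i => by simp [W, hS], le_refl _⟩
      | succ n ih =>
        obtain ⟨hsum, hfle⟩ := ih
        by_cases h : n < d
        · set k : Fin d := ⟨n, h⟩ with hk
          have hW : W (n + 1) = Tshift k (T k - S k) (W n) := by simp [W, h, hk]
          have hε : 0 ≤ T k - S k := by
            have := huv k; simp only [hS, hT]; linarith
          constructor
          · intro i
            rw [hW, sum_Tshift, hsum i]
            rcases lt_trichotomy (i : ℕ) n with hi | hi | hi
            · have : ¬ ((k : ℕ) ≤ (i : ℕ)) := by simp [hk]; omega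
              have h2 : ¬ ((k : ℕ) + 1 ≤ (i : ℕ)) := by simp [hk]; omega
              simp [this, h2, hi, Nat.lt_succ_of_lt hi]
            · have hik : i = k := by simp [hk, Fin.ext_iff, hi]
              have h1 : (k : ℕ) ≤ (i : ℕ) := by simp [hk, hi]
              have h2 : ¬ ((k : ℕ) + 1 ≤ (i : ℕ)) := by simp [hk, hi]
              rw [if_pos h1, if_neg h2, if_neg (by omega : ¬ (i : ℕ) < n),
                if_pos (by omega : (i : ℕ) < n + 1), hik]
              ring
            · have h1 : (k : ℕ) ≤ (i : ℕ) := by simp [hk]; omega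
              have h2 : (k : ℕ) + 1 ≤ (i : ℕ) := by simp [hk]; omega
              rw [if_pos h1, if_pos h2, if_neg (by omega : ¬ (i : ℕ) < n),
                if_neg (by omega : ¬ (i : ℕ) < n + 1)]
              ring
          · rw [hW]
            calc f u ≤ f (W n) := hfle
              _ = f (Tshift k 0 (W n)) := by rw [Tshift_zero]
              _ ≤ f (Tshift k (T k - S k) (W n)) := hmono (W n) k hε
        · have hW : W (n + 1) = W n := by simp [W, h]
          refine ⟨fun i => ?_, hW ▸ hfle⟩
          rw [hW, hsum i]
          have : (i : ℕ) < n := lt_of_lt_of_le i.isLt (Nat.le_of_not_lt h)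
          simp [this, Nat.lt_succ_of_lt this]
    obtain ⟨hsum, hfle⟩ := key d
    have hWd : W d = v := by
      apply eq_of_sum_Iic_eq
      intro i
      rw [hsum i, if_pos i.isLt]
    rwa [hWd] at hfle
end
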